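/- Let λ^t be an unrepeated elementary divisor of f (d(f,t) = 1) and let u be a generator of V with e(u) = t. Then for every j with 0 ≤ j ≤ t, the characteristic hull of f^j(u) satisfies ⟨f^j(u)⟩^c = f^j(V) ∩ ker(f^{t−j}), and in particular ⟨f^j(u)⟩^c is hyperinvariant. -/

import Mathlib

open Module LinearMap

section Defs

variable {K V : Type*} [Field K] [AddCommGroup V] [Module K V]

/-- `α` commutes with `f`. -/
def Commutes (f : V →ₗ[K] V) (α : V ≃ₗ[K] V) : Prop :=
  ∀ v, α (f v) = f (α v)

/-- `X` is hyperinvariant: invariant under every endomorphism commuting with `f`. -/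
def Hyperinv (f : V →ₗ[K] V) (X : Submodule K V) : Prop :=
  ∀ g : V →ₗ[K] V, (∀ v, g (f v) = f (g v)) → ∀ x ∈ X, g x ∈ X

/-- `X` is characteristic: `f`-invariant and invariant under every automorphism
commuting with `f`. -/
def Charinv (f : V →ₗ[K] V) (X : Submodule K V) : Prop :=
  (∀ x ∈ X, f x ∈ X) ∧ ∀ α : V ≃ₗ[K] V, Commutes f α → ∀ x ∈ X, α x ∈ X

/-- The characteristic hull of a set `B`: the subspace spanned by all
`f^i (α b)`, `b ∈ B`, `α` an automorphism commuting with `f`. -/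
def charHull (f : V →ₗ[K] V) (B : Set V) : Submodule K V :=
  Submodule.span K
    {y | ∃ b ∈ B, ∃ i : ℕ, ∃ α : V ≃ₗ[K] V, Commutes f α ∧ y = (f ^ i) (α b)}

/-- The `f`-cyclic subspace generated by `x`. -/
def cyc (f : V →ₗ[K] V) (x : V) : Submodule K V :=
  Submodule.span K (Set.range fun i : ℕ => (f ^ i) x)

/-- The `f`-invariant span of a set `B`. -/
def invSpan (f : V →ₗ[K] V) (B : Set V) : Submodule K V :=
  Submodule.span K {y | ∃ b ∈ B, ∃ i : ℕ, y = (f ^ i) b}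

/-- The exponent of `x`: the least `ℓ` with `f^ℓ x = 0`. -/
noncomputable def expnt (f : V →ₗ[K] V) (x : V) : ℕ :=
  sInf {ℓ : ℕ | (f ^ ℓ) x = 0}

/-- The height of `x`: the largest `q` with `x ∈ f^q V`. -/
noncomputable def hgt (f : V →ₗ[K] V) (x : V) : ℕ :=
  sSup {q : ℕ | x ∈ LinearMap.range (f ^ q)}

/-- `u` is a generator of `V`: `V = ⟨u⟩ ⊕ V₂` for some `f`-invariant `V₂`. -/
def IsGenerator (f : V →ₗ[K] V) (u : V) : Prop :=
  u ≠ 0 ∧ ∃ V₂ : Submodule K V, (∀ x ∈ V₂, f x ∈ V₂) ∧ IsCompl (cyc f u) V₂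

/-- `(u 0, …, u (m-1))` is a generator tuple of `V`:
`V = ⟨u 0⟩ ⊕ ⋯ ⊕ ⟨u (m-1)⟩` with nondecreasing exponents. -/
def IsGenTuple {m : ℕ} (f : V →ₗ[K] V) (u : Fin m → V) : Prop :=
  DirectSum.IsInternal (fun i => cyc f (u i)) ∧ Monotone fun i => expnt f (u i)

/-- The Ulm invariant `d(f,r) = dim ((ker f ⊓ f^{r-1} V) / (ker f ⊓ f^r V))`. -/
noncomputable def ulm (f : V →ₗ[K] V) (r : ℕ) : ℕ :=
  Module.finrank K
    (↥(LinearMap.ker f ⊓ LinearMap.range (f ^ (r - 1))) ⧸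
      Submodule.comap (LinearMap.ker f ⊓ LinearMap.range (f ^ (r - 1))).subtype
        (LinearMap.ker f ⊓ LinearMap.range (f ^ r)))

/-- The largest hyperinvariant subspace contained in `X`
(the sum of all hyperinvariant subspaces contained in `X`). -/
noncomputable def largestHyperinv (f : V →ₗ[K] V) (X : Submodule K V) : Submodule K V :=
  sSup {W : Submodule K V | Hyperinv f W ∧ W ≤ X}

end Defs

section Aux

variable {K V : Type*} [Field K] [AddCommGroup V] [Module K V]

-- helper lemmas

lemma commPow (f : V →ₗ[K] V) (g : V → V) (h : ∀ v, g (f v) = f (g v)) (k : ℕ) :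
    ∀ v, g ((f ^ k) v) = (f ^ k) (g v) := by
  induction k with
  | zero => intro v; simp
  | succ n ih =>
    intro v
    rw [pow_succ, Module.End.mul_apply, ih, Module.End.mul_apply, h]

lemma pow_apply_pow (f : V →ₗ[K] V) (a b : ℕ) (v : V) :
    (f ^ a) ((f ^ b) v) = (f ^ (a + b)) v := by
  rw [pow_add, Module.End.mul_apply]

lemma mem_cyc (f : V →ₗ[K] V) (u : V) (i : ℕ) : (f ^ i) u ∈ cyc f u :=
  Submodule.subset_span ⟨i, rfl⟩

lemma cyc_inv (f : V →ₗ[K] V) (u : V) : ∀ x ∈ cyc f u, f x ∈ cyc f u := by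
  intro x hx
  have : cyc f u ≤ (cyc f u).comap f := by
    rw [cyc, Submodule.span_le]
    rintro _ ⟨i, rfl⟩
    have h1 : f ((f ^ i) u) = (f ^ (i + 1)) u := by
      rw [pow_succ', Module.End.mul_apply]
    simp only [SetLike.mem_coe, Submodule.mem_comap]
    rw [h1]
    exact mem_cyc f u _
  exact this hx

lemma pow_mem_inv (f : V →ₗ[K] V) (W : Submodule K V) (hW : ∀ x ∈ W, f x ∈ W)
    (i : ℕ) : ∀ x ∈ W, (f ^ i) x ∈ W := by
  induction i with
  | zero => intro x hx; simpa using hx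
  | succ n ih =>
    intro x hx
    rw [pow_succ, Module.End.mul_apply]
    exact ih _ (hW x hx)

lemma pow_zero_of_le (f : V →ₗ[K] V) (u : V) (t : ℕ) (hut : (f ^ t) u = 0)
    (m : ℕ) (hm : t ≤ m) : (f ^ m) u = 0 := by
  have : m = (m - t) + t := by omega
  rw [this, pow_add, Module.End.mul_apply, hut, map_zero]

lemma li_iterates (f : V →ₗ[K] V) (u : V) (t : ℕ)
    (hne : ∀ i < t, (f ^ i) u ≠ 0) (hut : (f ^ t) u = 0) :
    LinearIndependent K (fun i : Fin t => (f ^ (i : ℕ)) u) := by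
  rw [Fintype.linearIndependent_iff]
  intro c hc
  classical
  by_contra hcon
  push_neg at hcon
  obtain ⟨i₁, hi₁⟩ := hcon
  have hF : (Finset.univ.filter (fun i : Fin t => c i ≠ 0)).Nonempty :=
    ⟨i₁, by simp [hi₁]⟩
  obtain ⟨i₀, hi₀mem, hi₀min⟩ := Finset.exists_min_image _ (fun i : Fin t => (i : ℕ)) hF
  have hci₀ : c i₀ ≠ 0 := (Finset.mem_filter.mp hi₀mem).2
  have hq := congrArg (f ^ (t - 1 - (i₀ : ℕ))) hc
  rw [map_zero, map_sum] at hq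
  have hterm : ∀ i : Fin t, i ∈ Finset.univ → i ≠ i₀ →
      (f ^ (t - 1 - (i₀ : ℕ))) (c i • (f ^ (i : ℕ)) u) = 0 := by
    intro i _ hne'
    by_cases hci : c i = 0
    · simp [hci]
    · have : (i₀ : ℕ) ≤ (i : ℕ) := hi₀min i (Finset.mem_filter.mpr ⟨Finset.mem_univ _, hci⟩)
      have hlt : (i₀ : ℕ) < (i : ℕ) := lt_of_le_of_ne this (by
        intro h; exact hne' (Fin.ext h.symm))
      rw [map_smul, pow_apply_pow]
      have : (f ^ (t - 1 - (i₀ : ℕ) + (i : ℕ))) u = 0 :=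
        pow_zero_of_le f u t hut _ (by omega)
      rw [this, smul_zero]
  rw [Finset.sum_eq_single i₀ hterm (by simp)] at hq
  rw [map_smul, pow_apply_pow] at hq
  have hexp : t - 1 - (i₀ : ℕ) + (i₀ : ℕ) = t - 1 := by omega
  rw [hexp] at hq
  exact hci₀ ((smul_eq_zero.mp hq).resolve_right (hne (t - 1) (by omega)))


lemma cyc_eq_span_fin (f : V →ₗ[K] V) (u : V) (t : ℕ) (hut : (f ^ t) u = 0) :
    Submodule.span K (Set.range fun i : Fin t => (f ^ (i : ℕ)) u) = cyc f u := by
  apply le_antisymm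
  · rw [Submodule.span_le]
    rintro _ ⟨i, rfl⟩
    exact mem_cyc f u _
  · rw [cyc, Submodule.span_le]
    rintro _ ⟨i, rfl⟩
    by_cases hi : i < t
    · exact Submodule.subset_span ⟨⟨i, hi⟩, rfl⟩
    · have h0 : (f ^ i) u = 0 := pow_zero_of_le f u t hut i (by omega)
      show (f ^ i) u ∈ _
      rw [h0]
      exact Submodule.zero_mem _

lemma exists_alpha (f : V →ₗ[K] V) (t : ℕ) (ht : 1 ≤ t) (u : V)
    (hut : (f ^ t) u = 0) (hne : ∀ i < t, (f ^ i) u ≠ 0)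
    (V₂ : Submodule K V) (hV₂ : ∀ x ∈ V₂, f x ∈ V₂) (hc : IsCompl (cyc f u) V₂)
    (w : V) (hw : w ∈ V₂) (hwt : (f ^ t) w = 0) :
    ∃ α : V ≃ₗ[K] V, Commutes f α ∧ α u = u + w := by
  have hli := li_iterates f u t hne hut
  let b : Basis (Fin t) K ↥(cyc f u) :=
    (Basis.span hli).map (LinearEquiv.ofEq _ _ (cyc_eq_span_fin f u t hut))
  have hb : ∀ i : Fin t, (b i : V) = (f ^ (i : ℕ)) u := by
    intro i
    simp [b, Basis.span_apply]
  let h : ↥(cyc f u) →ₗ[K] V := b.constr K (fun i : Fin t => (f ^ (i : ℕ)) w)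
  have hhb : ∀ i, h (b i) = (f ^ (i : ℕ)) w := fun i => b.constr_basis K _ i
  have hrange : ∀ c : ↥(cyc f u), h c ∈ V₂ := by
    intro c
    have hle : (⊤ : Submodule K ↥(cyc f u)) ≤ Submodule.comap h V₂ := by
      rw [← b.span_eq, Submodule.span_le]
      rintro _ ⟨i, rfl⟩
      simp only [SetLike.mem_coe, Submodule.mem_comap, hhb]
      exact pow_mem_inv f V₂ hV₂ _ w hw
    exact hle Submodule.mem_top
  have hcycinv : ∀ x ∈ cyc f u, f x ∈ cyc f u := cyc_inv f u
  let fr : ↥(cyc f u) →ₗ[K] ↥(cyc f u) := f.restrict hcycinv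
  have hcomm1 : ∀ c : ↥(cyc f u), h (fr c) = f (h c) := by
    have heq : h ∘ₗ fr = f ∘ₗ h := by
      apply b.ext
      intro i
      rw [comp_apply, comp_apply, hhb]
      by_cases hi : (i : ℕ) + 1 < t
      · have hfrb : fr (b i) = b ⟨(i : ℕ) + 1, hi⟩ := by
          apply Subtype.ext
          show f ((b i : V)) = _
          rw [hb, hb]
          rw [pow_succ', Module.End.mul_apply]
        rw [hfrb, hhb]
        rw [pow_succ', Module.End.mul_apply]
      · have hieq : (i : ℕ) + 1 = t := by omega
        have hfrb : fr (b i) = 0 := by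
          apply Subtype.ext
          show f ((b i : V)) = (0 : V)
          rw [hb, ← Module.End.mul_apply, ← pow_succ', hieq, hut]
        rw [hfrb, map_zero, ← Module.End.mul_apply, ← pow_succ', hieq, hwt]
    intro c
    have := congrArg (fun m : ↥(cyc f u) →ₗ[K] V => m c) heq
    simpa using this
  let π : V →ₗ[K] ↥(cyc f u) := (cyc f u).linearProjOfIsCompl V₂ hc
  let g : V →ₗ[K] V := h ∘ₗ π
  have hπleft : ∀ (x : V) (hx : x ∈ cyc f u), π x = ⟨x, hx⟩ :=
    fun x hx => Submodule.linearProjOfIsCompl_apply_left hc ⟨x, hx⟩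
  have hπright : ∀ x ∈ V₂, π x = 0 :=
    fun x hx => Submodule.linearProjOfIsCompl_apply_right hc ⟨x, hx⟩
  have hgcyc : ∀ (x : V) (hx : x ∈ cyc f u), g x = h ⟨x, hx⟩ := by
    intro x hx
    show h (π x) = _
    rw [hπleft x hx]
  have hgV₂ : ∀ x ∈ V₂, g x = 0 := by
    intro x hx
    show h (π x) = 0
    rw [hπright x hx, map_zero]
  have hgf : ∀ x, g (f x) = f (g x) := by
    intro x
    have hx : x ∈ cyc f u ⊔ V₂ := by rw [hc.sup_eq_top]; trivial
    obtain ⟨cx, hcx, d, hd, rfl⟩ := Submodule.mem_sup.mp hx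
    have e1 : g (f cx) = f (g cx) := by
      rw [hgcyc (f cx) (hcycinv cx hcx), hgcyc cx hcx]
      have hsub : (⟨f cx, hcycinv cx hcx⟩ : ↥(cyc f u)) = fr ⟨cx, hcx⟩ := rfl
      rw [hsub, hcomm1]
    have e2 : g (f d) = f (g d) := by
      rw [hgV₂ (f d) (hV₂ d hd), hgV₂ d hd, map_zero]
    simp only [map_add, e1, e2]
  have hg2 : ∀ x, g (g x) = 0 := by
    intro x
    have hmem : g x ∈ V₂ := hrange (π x)
    exact hgV₂ _ hmem
  refine ⟨LinearEquiv.ofLinear (1 + g) (1 - g) ?_ ?_, ?_, ?_⟩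
  · ext x
    simp only [comp_apply, LinearMap.add_apply, LinearMap.sub_apply, Module.End.one_apply, id_apply, id_coe, map_sub, map_add,
      hg2 x]
    abel
  · ext x
    simp only [comp_apply, LinearMap.add_apply, LinearMap.sub_apply, Module.End.one_apply, id_apply, id_coe, map_sub, map_add,
      hg2 x]
    abel
  · intro v
    rw [LinearEquiv.ofLinear_apply, LinearEquiv.ofLinear_apply]
    simp only [LinearMap.add_apply, Module.End.one_apply, map_add, hgf v]
  · rw [LinearEquiv.ofLinear_apply]
    have hucyc : u ∈ cyc f u := by
      have := mem_cyc f u 0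
      simpa using this
    have hgu : g u = w := by
      rw [hgcyc u hucyc]
      have hsub : (⟨u, hucyc⟩ : ↥(cyc f u)) = b ⟨0, ht⟩ := by
        apply Subtype.ext
        rw [hb]
        simp
      rw [hsub, hhb]
      simp
    simp only [LinearMap.add_apply, Module.End.one_apply, hgu]

end Aux


theorem stmt8 {K V : Type*} [Field K] [AddCommGroup V] [Module K V]
    [FiniteDimensional K V] (f : V →ₗ[K] V) (hf : IsNilpotent f)
    (t : ℕ) (ht : 1 ≤ t) (hd : ulm f t = 1)
    (u : V) (hu : IsGenerator f u) (heu : expnt f u = t)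
    (j : ℕ) (hj : j ≤ t) :
    charHull f {(f ^ j) u} = LinearMap.range (f ^ j) ⊓ LinearMap.ker (f ^ (t - j)) ∧
      Hyperinv f (charHull f {(f ^ j) u}) := by
  obtain ⟨n, hn⟩ := hf
  have hnu : (f ^ n) u = 0 := by rw [hn]; rfl
  have hut : (f ^ t) u = 0 := by
    have hmem : t ∈ {ℓ : ℕ | (f ^ ℓ) u = 0} := heu ▸ Nat.sInf_mem ⟨n, hnu⟩
    exact hmem
  have hne : ∀ i < t, (f ^ i) u ≠ 0 := by
    intro i hi h0
    have : t ≤ i := heu ▸ Nat.sInf_le h0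
    omega
  obtain ⟨hu0, V₂, hV₂, hc⟩ := hu
  have hmain : charHull f {(f ^ j) u}
      = LinearMap.range (f ^ j) ⊓ LinearMap.ker (f ^ (t - j)) := by
    apply le_antisymm
    · rw [charHull, Submodule.span_le]
      rintro _ ⟨x, hx, i, α, hα, rfl⟩
      rw [Set.mem_singleton_iff] at hx
      subst hx
      have hαpow : ∀ k v, α ((f ^ k) v) = (f ^ k) (α v) := fun k => commPow f α hα k
      refine Submodule.mem_inf.mpr ⟨?_, ?_⟩
      · rw [hαpow j u]
        exact ⟨(f ^ i) (α u), by rw [pow_apply_pow, pow_apply_pow, add_comm]⟩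
      · rw [LinearMap.mem_ker, hαpow j u, pow_apply_pow, pow_apply_pow]
        have hex : t - j + i + j = i + t := by omega
        have h0 : (f ^ t) (α u) = 0 := by
          rw [← hαpow t u, hut, map_zero]
        rw [hex, ← pow_apply_pow, h0, map_zero]
    · intro x hx
      obtain ⟨h1, hker⟩ := Submodule.mem_inf.mp hx
      obtain ⟨y, rfl⟩ := LinearMap.mem_range.mp h1
      rw [LinearMap.mem_ker] at hker
      have hty : (f ^ t) y = 0 := by
        rw [show t = t - j + j by omega, pow_add, Module.End.mul_apply]
        exact hker
      have hy : y ∈ cyc f u ⊔ V₂ := by rw [hc.sup_eq_top]; trivial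
      obtain ⟨cy, hcy, d, hd, rfl⟩ := Submodule.mem_sup.mp hy
      have hfc : (f ^ t) cy ∈ cyc f u := pow_mem_inv f _ (cyc_inv f u) t cy hcy
      have hfd : (f ^ t) d ∈ V₂ := pow_mem_inv f V₂ hV₂ t d hd
      have hsum : (f ^ t) cy + (f ^ t) d = 0 := by
        rw [← map_add]; exact hty
      have hfd0 : (f ^ t) d = 0 := by
        have hmem1 : (f ^ t) d ∈ cyc f u := by
          rw [eq_neg_of_add_eq_zero_right hsum]
          exact neg_mem hfc
        exact Submodule.disjoint_def.mp hc.disjoint _ hmem1 hfd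
      obtain ⟨α, hα, hαu⟩ := exists_alpha f t ht u hut hne V₂ hV₂ hc d hd hfd0
      have hcy' : (f ^ j) cy ∈ charHull f {(f ^ j) u} := by
        have hle : cyc f u ≤ Submodule.comap (f ^ j) (charHull f {(f ^ j) u}) := by
          rw [cyc, Submodule.span_le]
          rintro _ ⟨i, rfl⟩
          simp only [SetLike.mem_coe, Submodule.mem_comap]
          apply Submodule.subset_span
          refine ⟨(f ^ j) u, rfl, i, LinearEquiv.refl K V, fun v => rfl, ?_⟩
          rw [LinearEquiv.refl_apply, pow_apply_pow, pow_apply_pow, add_comm]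
        exact hle hcy
      have hd' : (f ^ j) d ∈ charHull f {(f ^ j) u} := by
        have hmem1 : α ((f ^ j) u) ∈ charHull f {(f ^ j) u} :=
          Submodule.subset_span ⟨(f ^ j) u, rfl, 0, α, hα, by simp⟩
        have hmem2 : (f ^ j) u ∈ charHull f {(f ^ j) u} :=
          Submodule.subset_span ⟨(f ^ j) u, rfl, 0, LinearEquiv.refl K V, fun v => rfl, by simp⟩
        have heq : (f ^ j) d = α ((f ^ j) u) - (f ^ j) u := by
          rw [commPow f α hα j u, hαu, map_add]
          abel
        rw [heq]
        exact sub_mem hmem1 hmem2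
      rw [map_add]
      exact add_mem hcy' hd'
  refine ⟨hmain, ?_⟩
  rw [Hyperinv, hmain]
  intro g hg x hx
  obtain ⟨h1, hker⟩ := Submodule.mem_inf.mp hx
  obtain ⟨y, rfl⟩ := LinearMap.mem_range.mp h1
  rw [LinearMap.mem_ker] at hker
  refine Submodule.mem_inf.mpr ⟨⟨g y, (commPow f g hg j y).symm⟩, ?_⟩
  rw [LinearMap.mem_ker, ← commPow f g hg (t - j), hker, map_zero]
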